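/- If s₁, ..., sₘ are distinct square-free positive integers, then the real numbers √s₁, ..., √sₘ are linearly independent over the rationals: if c₁, ..., cₘ ∈ ℚ satisfy ∑ᵢ cᵢ√sᵢ = 0, then all cᵢ = 0. -/

import Mathlib

open Real

noncomputable def sqK (Q : Finset ℕ) : Subfield ℝ :=
  Subfield.closure ((fun p : ℕ => Real.sqrt p) '' ↑Q)

lemma sqK_natCast (Q : Finset ℕ) (q : ℕ) : ((q:ℕ):ℝ) ∈ sqK Q := by
  exact_mod_cast natCast_mem (sqK Q) q

lemma not_isSquare_of_sf {n r : ℕ} (hn : Squarefree n) (hr : r.Prime) (hrn : r ∣ n) :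
    Irrational (Real.sqrt n) := by
  rw [irrational_sqrt_natCast_iff]
  rintro ⟨k, hk⟩
  have := hn k (hk ▸ dvd_refl _)
  simp [Nat.isUnit_iff] at this
  subst this
  simp at hk
  subst hk
  exact hr.one_lt.ne' (Nat.eq_one_of_dvd_one hrn)

lemma sqrt_not_mem : ∀ (Q : Finset ℕ), (∀ p ∈ Q, p.Prime) →
    ∀ n : ℕ, Squarefree n → (∃ r : ℕ, r.Prime ∧ r ∣ n ∧ r ∉ Q) →
    Real.sqrt n ∉ sqK Q := by
  intro Q
  induction Q using Finset.induction_on with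
  | empty =>
    rintro - n hn ⟨r, hr, hrn, -⟩ hmem
    have hle : sqK ∅ ≤ (Rat.castHom ℝ).fieldRange := by
      apply Subfield.closure_le.2
      simp
    obtain ⟨x, hx⟩ := RingHom.mem_fieldRange.1 (hle hmem)
    exact not_isSquare_of_sf hn hr hrn ⟨x, hx⟩
  | @insert q Q' hqQ ih =>
    rintro hQ n hn ⟨r, hrp, hrn, hrQ⟩ hmem
    have hq' : q.Prime := hQ q (Finset.mem_insert_self _ _)
    have hQ' : ∀ p ∈ Q', p.Prime := fun p hp => hQ p (Finset.mem_insert_of_mem hp)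
    have ihq : Real.sqrt q ∉ sqK Q' := ih hQ' q hq'.squarefree ⟨q, hq', dvd_refl _, hqQ⟩
    set t := Real.sqrt q with ht_def
    have ht : t * t = (q : ℝ) := Real.mul_self_sqrt (by positivity)
    -- nonvanishing
    have nonvan : ∀ a b : ℝ, a ∈ sqK Q' → b ∈ sqK Q' → a + b * t = 0 → a = 0 ∧ b = 0 := by
      intro a b ha hb hab
      by_cases hb0 : b = 0
      · subst hb0; simp at hab; exact ⟨hab, rfl⟩
      · exfalso
        have : t = -a / b := by field_simp; linarith
        exact ihq (this ▸ div_mem (neg_mem ha) hb)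
    -- the subfield of elements a + b t
    set S : Subfield ℝ :=
      { carrier := {x | ∃ a ∈ sqK Q', ∃ b ∈ sqK Q', x = a + b * t}
        zero_mem' := ⟨0, zero_mem _, 0, zero_mem _, by ring⟩
        one_mem' := ⟨1, one_mem _, 0, zero_mem _, by ring⟩
        add_mem' := by
          rintro x y ⟨a, ha, b, hb, rfl⟩ ⟨c, hc, d, hd, rfl⟩
          exact ⟨a + c, add_mem ha hc, b + d, add_mem hb hd, by ring⟩
        neg_mem' := by
          rintro x ⟨a, ha, b, hb, rfl⟩
          exact ⟨-a, neg_mem ha, -b, neg_mem hb, by ring⟩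
        mul_mem' := by
          rintro x y ⟨a, ha, b, hb, rfl⟩ ⟨c, hc, d, hd, rfl⟩
          refine ⟨a * c + b * d * q, add_mem (mul_mem ha hc)
            (mul_mem (mul_mem hb hd) (sqK_natCast _ q)),
            a * d + b * c, add_mem (mul_mem ha hd) (mul_mem hb hc), ?_⟩
          have : (a + b * t) * (c + d * t) = a*c + b*d*(t*t) + (a*d + b*c)*t := by ring
          rw [this, ht]
        inv_mem' := by
          rintro x ⟨a, ha, b, hb, rfl⟩
          by_cases hx0 : a + b * t = 0
          · obtain ⟨h1, h2⟩ := nonvan a b ha hb hx0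
            exact ⟨0, zero_mem _, 0, zero_mem _, by simp [h1, h2]⟩
          · have hd0 : a * a - b * b * q ≠ 0 := by
              intro hd
              have hfac : (a + b * t) * (a - b * t) = a*a - b*b*q := by
                have : (a + b * t) * (a - b * t) = a*a - b*b*(t*t) := by ring
                rw [this, ht]
              have : a - b * t = 0 := by
                rcases mul_eq_zero.1 (hfac.trans hd) with h | h
                · exact absurd h hx0
                · exact h
              obtain ⟨h1, h2⟩ := nonvan a (-b) ha (neg_mem hb) (by linarith)
              exact hx0 (by simp [h1, neg_eq_zero.1 h2])
            refine ⟨a / (a*a - b*b*q), div_mem ha (sub_mem (mul_mem ha ha)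
              (mul_mem (mul_mem hb hb) (sqK_natCast _ q))),
              -b / (a*a - b*b*q), div_mem (neg_mem hb) (sub_mem (mul_mem ha ha)
              (mul_mem (mul_mem hb hb) (sqK_natCast _ q))), ?_⟩
            apply inv_eq_of_mul_eq_one_right
            field_simp
            have hd0' : a ^ 2 - b ^ 2 * (q:ℝ) ≠ 0 := by rw [sq, sq]; exact hd0
            rw [div_eq_one_iff_eq hd0']
            linear_combination (-b^2) * ht }
    have hle : sqK (insert q Q') ≤ S := by
      apply Subfield.closure_le.2
      rintro x ⟨p, hp, rfl⟩
      simp only [Finset.coe_insert, Set.mem_insert_iff] at hp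
      rcases hp with rfl | hp
      · exact ⟨0, zero_mem _, 1, one_mem _, by ring⟩
      · exact ⟨Real.sqrt p, Subfield.subset_closure ⟨p, by exact_mod_cast hp, rfl⟩,
          0, zero_mem _, by ring⟩
    obtain ⟨a, ha, b, hb, hab⟩ := hle hmem
    have hn2 : ((n:ℝ)) = a*a + b*b*(q:ℝ) + (2*a*b)*t := by
      have h1 : (n:ℝ) = (a + b*t)*(a + b*t) := by
        rw [← hab]; exact (Real.mul_self_sqrt (by positivity)).symm
      have h2 : (a + b*t)*(a + b*t) = a*a + b*b*(t*t) + (2*a*b)*t := by ring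
      rw [h2, ht] at h1
      exact h1
    by_cases hb0 : b = 0
    · refine ih hQ' n hn ⟨r, hrp, hrn, fun hh => hrQ (Finset.mem_insert_of_mem hh)⟩ ?_
      rw [hab, hb0]
      simpa using ha
    by_cases ha0 : a = 0
    · have hbt : Real.sqrt n = b * t := by rw [hab, ha0]; ring
      have htne : t ≠ 0 := by
        intro h0
        rw [h0] at ht
        have : (q:ℝ) = 0 := by linarith
        exact_mod_cast hq'.pos.ne' (by exact_mod_cast this)
      by_cases hqn : q ∣ n
      · obtain ⟨n', rfl⟩ := hqn
        have hrn' : r ∣ n' := by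
          rcases (Nat.Prime.dvd_mul hrp).1 hrn with h | h
          · exact absurd ((Nat.prime_dvd_prime_iff_eq hrp hq').1 h)
              (fun hh => hrQ (hh ▸ Finset.mem_insert_self _ _))
          · exact h
        have hsf' : Squarefree n' := hn.squarefree_of_dvd ⟨q, mul_comm q n'⟩
        have hsplit : Real.sqrt ((q*n' : ℕ) : ℝ) = t * Real.sqrt n' := by
          push_cast
          rw [ht_def, ← Real.sqrt_mul (by positivity)]
        have hb' : Real.sqrt n' = b := by
          have h3 : t * Real.sqrt n' = b * t := hsplit.symm.trans hbt
          have h4 : Real.sqrt n' * t = b * t := by rw [mul_comm]; exact h3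
          exact mul_right_cancel₀ htne h4
        refine ih hQ' n' hsf' ⟨r, hrp, hrn',
          fun hh => hrQ (Finset.mem_insert_of_mem hh)⟩ ?_
        rw [hb']
        exact hb
      · have hcop : Nat.Coprime n q := ((hq'.coprime_iff_not_dvd).2 hqn).symm
        have hsf' : Squarefree (n*q) :=
          Nat.squarefree_mul_iff.2 ⟨hcop, hn, hq'.squarefree⟩
        have hval : Real.sqrt ((n*q : ℕ) : ℝ) = b * (q:ℝ) := by
          push_cast
          rw [Real.sqrt_mul (by positivity), hbt, ← ht_def, mul_assoc, ht]
        refine ih hQ' (n*q) hsf' ⟨r, hrp, hrn.mul_right q,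
          fun hh => hrQ (Finset.mem_insert_of_mem hh)⟩ ?_
        rw [hval]
        exact mul_mem hb (sqK_natCast _ q)
    · apply ihq
      have habne : (2*a*b) ≠ 0 := by
        simp [ha0, hb0]
      have hteq : t = ((n:ℝ) - a*a - b*b*(q:ℝ)) / (2*a*b) := by
        field_simp
        linarith [hn2]
      rw [hteq]
      exact div_mem (sub_mem (sub_mem (sqK_natCast _ n) (mul_mem ha ha))
        (mul_mem (mul_mem hb hb) (sqK_natCast _ q)))
        (mul_mem (mul_mem (by exact_mod_cast sqK_natCast Q' 2 : (2:ℝ) ∈ sqK Q') ha) hb)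

lemma sqrt_mem (Q : Finset ℕ) : ∀ n : ℕ, Squarefree n →
    (∀ r : ℕ, r.Prime → r ∣ n → r ∈ Q) → Real.sqrt n ∈ sqK Q := by
  intro n
  induction n using Nat.strong_induction_on with
  | _ n ih =>
    intro hn hfac
    rcases eq_or_ne n 1 with rfl | hne
    · simpa using one_mem (sqK Q)
    · obtain ⟨r, hrp, hrn⟩ := Nat.exists_prime_and_dvd hne
      obtain ⟨n', rfl⟩ := hrn
      have hn0 : n' ≠ 0 := by
        rintro rfl
        exact hn.ne_zero (mul_zero r)
      have hlt : n' < r * n' := by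
        have := hrp.one_lt
        calc n' = 1 * n' := (one_mul n').symm
        _ < r * n' := by
          exact (Nat.mul_lt_mul_right (Nat.pos_of_ne_zero hn0)).2 this
      have hsplit : Real.sqrt ((r * n' : ℕ) : ℝ) = Real.sqrt r * Real.sqrt n' := by
        push_cast
        rw [← Real.sqrt_mul (by positivity)]
      rw [hsplit]
      exact mul_mem
        (Subfield.subset_closure ⟨r, by exact_mod_cast hfac r hrp (Dvd.intro n' rfl), rfl⟩)
        (ih n' hlt (hn.squarefree_of_dvd ⟨r, mul_comm r n'⟩)
          (fun s hs hsd => hfac s hs (hsd.mul_left r)))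

lemma lin_indep : ∀ (Q : Finset ℕ), (∀ p ∈ Q, p.Prime) →
    ∀ (D : Finset ℕ), (∀ d ∈ D, Squarefree d ∧ ∀ r : ℕ, r.Prime → r ∣ d → r ∈ Q) →
    ∀ c : ℕ → ℚ, ∑ d ∈ D, (c d : ℝ) * Real.sqrt d = 0 → ∀ d ∈ D, c d = 0 := by
  intro Q
  induction Q using Finset.induction_on with
  | empty =>
    intro _h D hD c hsum d hd
    have hd1 : ∀ e ∈ D, e = 1 := by
      intro e he
      obtain ⟨hsf, hfac⟩ := hD e he
      by_contra hne
      obtain ⟨r, hrp, hrd⟩ := Nat.exists_prime_and_dvd hne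
      exact absurd (hfac r hrp hrd) (Finset.notMem_empty r)
    rcases Finset.subset_singleton_iff.1 (fun e he => Finset.mem_singleton.2 (hd1 e he)) with
      rfl | hD1
    · exact absurd hd (Finset.notMem_empty d)
    · rw [hD1] at hsum hd
      simp at hsum hd
      rw [hd]
      exact_mod_cast hsum
  | @insert p Q' hpQ ih =>
    intro hQ D hD c hsum d hd
    have hp' : p.Prime := hQ p (Finset.mem_insert_self _ _)
    have hQ' : ∀ r ∈ Q', r.Prime := fun r hr => hQ r (Finset.mem_insert_of_mem hr)
    classical
    set D0 := D.filter (fun d => ¬ p ∣ d) with hD0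
    set D1 := D.filter (fun d => p ∣ d) with hD1
    have hcond0 : ∀ e ∈ D0, Squarefree e ∧ ∀ r : ℕ, r.Prime → r ∣ e → r ∈ Q' := by
      intro e he
      rw [hD0, Finset.mem_filter] at he
      obtain ⟨hsf, hfac⟩ := hD e he.1
      refine ⟨hsf, fun r hr hrd => ?_⟩
      rcases Finset.mem_insert.1 (hfac r hr hrd) with rfl | h
      · exact absurd hrd he.2
      · exact h
    have hsum' : ∑ e ∈ D0, (c e : ℝ) * Real.sqrt e
        + Real.sqrt p * ∑ e ∈ D1, (c e : ℝ) * Real.sqrt (e / p : ℕ) = 0 := by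
      rw [Finset.mul_sum]
      rw [← hsum, ← Finset.sum_filter_add_sum_filter_not D (fun d => ¬ p ∣ d)]
      congr 1
      · rw [hD1]
        apply Finset.sum_congr
        · congr 1
          ext e
          simp
        · intro e he
          rw [Finset.mem_filter, not_not] at he
          obtain ⟨hed, hpe⟩ := he
          obtain ⟨e', rfl⟩ := hpe
          rw [Nat.mul_div_cancel_left e' hp'.pos]
          have : Real.sqrt ((p * e' : ℕ) : ℝ) = Real.sqrt p * Real.sqrt e' := by
            push_cast
            rw [← Real.sqrt_mul (by positivity)]
          rw [this]
          ring
    set A := ∑ e ∈ D0, (c e : ℝ) * Real.sqrt e with hA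
    set B := ∑ e ∈ D1, (c e : ℝ) * Real.sqrt (e / p : ℕ) with hB
    have hmemA : A ∈ sqK Q' := by
      apply Subfield.sum_mem
      intro e he
      obtain ⟨hsf, hfac⟩ := hcond0 e he
      exact mul_mem (SubfieldClass.ratCast_mem _ _) (sqrt_mem Q' e hsf hfac)
    have hcond1 : ∀ e ∈ D1, Squarefree (e / p) ∧
        ∀ r : ℕ, r.Prime → r ∣ (e / p) → r ∈ Q' := by
      intro e he
      rw [hD1, Finset.mem_filter] at he
      obtain ⟨hed, hpe⟩ := he
      obtain ⟨hsf, hfac⟩ := hD e hed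
      have hdvd : e / p ∣ e := Nat.div_dvd_of_dvd hpe
      refine ⟨hsf.squarefree_of_dvd hdvd, fun r hr hrd => ?_⟩
      rcases Finset.mem_insert.1 (hfac r hr (hrd.trans hdvd)) with rfl | h
      · exfalso
        have : r * r ∣ e := by
          obtain ⟨k, hk⟩ := hrd
          obtain ⟨e', rfl⟩ := hpe
          rw [Nat.mul_div_cancel_left e' hp'.pos] at hk
          subst hk
          exact ⟨k, by ring⟩
        exact hr.one_lt.ne' (Nat.isUnit_iff.1 (hsf r this))
      · exact h
    have hmemB : B ∈ sqK Q' := by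
      apply Subfield.sum_mem
      intro e he
      obtain ⟨hsf, hfac⟩ := hcond1 e he
      exact mul_mem (SubfieldClass.ratCast_mem _ _) (sqrt_mem Q' _ hsf hfac)
    have hB0 : B = 0 := by
      by_contra hB0
      have : Real.sqrt p = -A / B := by
        field_simp
        linarith [hsum']
      exact sqrt_not_mem Q' hQ' p hp'.squarefree ⟨p, hp', dvd_refl _, hpQ⟩
        (this ▸ div_mem (neg_mem hmemA) hmemB)
    have hA0 : A = 0 := by
      rw [hB0, mul_zero, add_zero] at hsum'
      exact hsum'
    by_cases hpd : p ∣ d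
    · -- d ∈ D1, use reindexed IH
      have hd1 : d ∈ D1 := Finset.mem_filter.2 ⟨hd, hpd⟩
      set E := D1.image (· / p) with hE
      have hinjp : ∀ x ∈ D1, ∀ y ∈ D1, x / p = y / p → x = y := by
        intro x hx y hy hxy
        rw [hD1, Finset.mem_filter] at hx hy
        obtain ⟨x', rfl⟩ := hx.2
        obtain ⟨y', rfl⟩ := hy.2
        rw [Nat.mul_div_cancel_left x' hp'.pos, Nat.mul_div_cancel_left y' hp'.pos] at hxy
        rw [hxy]
      have hsumE : ∑ e ∈ E, ((c (e * p) : ℚ) : ℝ) * Real.sqrt e = 0 := by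
        rw [hE, Finset.sum_image hinjp]
        rw [← hB0, hB]
        apply Finset.sum_congr rfl
        intro e he
        rw [hD1, Finset.mem_filter] at he
        rw [Nat.div_mul_cancel he.2]
      have hcondE : ∀ e ∈ E, Squarefree e ∧ ∀ r : ℕ, r.Prime → r ∣ e → r ∈ Q' := by
        intro e he
        obtain ⟨x, hx, rfl⟩ := Finset.mem_image.1 he
        exact hcond1 x hx
      have := ih hQ' E hcondE (fun e => c (e * p)) hsumE (d / p)
        (Finset.mem_image.2 ⟨d, hd1, rfl⟩)
      simpa [Nat.div_mul_cancel hpd] using this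
    · have hd0 : d ∈ D0 := Finset.mem_filter.2 ⟨hd, hpd⟩
      exact ih hQ' D0 hcond0 c hA0 d hd0

theorem ussr_stmt_0 (m : ℕ) (s : Fin m → ℕ) (hpos : ∀ i, 0 < s i)
    (hsq : ∀ i, Squarefree (s i)) (hinj : Function.Injective s)
    (c : Fin m → ℚ) (h : ∑ i, (c i : ℝ) * Real.sqrt (s i) = 0) :
    ∀ i, c i = 0 := by
  classical
  intro i
  set Q : Finset ℕ := Finset.univ.biUnion (fun i => (s i).primeFactors) with hQdef
  have hQ : ∀ p ∈ Q, p.Prime := by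
    intro p hp
    obtain ⟨j, -, hj⟩ := Finset.mem_biUnion.1 hp
    exact Nat.prime_of_mem_primeFactors hj
  set D := Finset.image s Finset.univ with hDdef
  have hD : ∀ d ∈ D, Squarefree d ∧ ∀ r : ℕ, r.Prime → r ∣ d → r ∈ Q := by
    intro d hd
    obtain ⟨j, -, rfl⟩ := Finset.mem_image.1 hd
    refine ⟨hsq j, fun r hr hrd => ?_⟩
    exact Finset.mem_biUnion.2 ⟨j, Finset.mem_univ j,
      Nat.mem_primeFactors.2 ⟨hr, hrd, (hpos j).ne'⟩⟩
  set c' : ℕ → ℚ := Function.extend s c 0 with hc'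
  have hc'app : ∀ i, c' (s i) = c i := fun i => hinj.extend_apply c 0 i
  have hsum : ∑ d ∈ D, (c' d : ℝ) * Real.sqrt d = 0 := by
    rw [hDdef, Finset.sum_image (fun x _ y _ hxy => hinj hxy), ← h]
    apply Finset.sum_congr rfl
    intro j _
    rw [hc'app]
  have := lin_indep Q hQ D hD c' hsum (s i)
    (Finset.mem_image.2 ⟨i, Finset.mem_univ i, rfl⟩)
  rwa [hc'app] at this
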